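/- arXiv:2309.13728 — 2 statements merged into one kernel-verified Lean document; each statement's English description precedes it below -/
import Mathlib

section
/- Fix reals A₁, A₂ > 0 with A₁ ≠ A₂ and A₃ > 2 A₁² A₂² / ((A₁ − A₂)² (A₁ + A₂)). Consider the weighted graph on vertex set ℤ² whose (undirected) edges are, for each x ∈ ℤ² with x₁ + x₂ even: edges {x, x−e₁} and {x, x−e₂} with weight A₁; edges {x, x+e₁} and {x, x+e₂} with weight A₂; edges {x, x+(2,2)} and {x, x−(2,2)} with weight A₃; and edges {x, x+(1,1)} and {x, x−(1,1)} with weight A₄, where e₁ = (1,0), e₂ = (0,1). Then there exists A₄ > 0 such that the function h : ℤ² → ℝ defined by h(x₁, x₂) = (−A₂/A₁)^{x₁} if x₁ = x₂ and h(x₁, x₂) = 0 otherwise, satisfies Δh(u) = 0 for every u ∈ ℤ², where Δh(u) = Σ_{w ~ u} a(u,w)(h(u) − h(w)) is the weighted Laplacian of this graph. In particular h is a nonzero harmonic function supported on the diagonal {x₁ = x₂}. -/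
/-- The vertex set of the square lattice. -/
abbrev Z2 := ℤ × ℤ

/-- The edge weights declared at a vertex `x` with `x₁ + x₂` even:
`a(x, x-e₁) = a(x, x-e₂) = A₁`, `a(x, x+e₁) = a(x, x+e₂) = A₂`,
`a(x, x±(2,2)) = A₃`, `a(x, x±(1,1)) = A₄`; all other pairs get weight `0`. -/
noncomputable def declaredWt (A1 A2 A3 A4 : ℝ) (x w : Z2) : ℝ :=
  if w = x - (1, 0) ∨ w = x - (0, 1) then A1
  else if w = x + (1, 0) ∨ w = x + (0, 1) then A2
  else if w = x + (2, 2) ∨ w = x - (2, 2) then A3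
  else if w = x + (1, 1) ∨ w = x - (1, 1) then A4
  else 0

/-- The full symmetric edge-weight function: edges are declared only at vertices with even
coordinate sum; pairs of vertices with both coordinate sums odd are non-adjacent. -/
noncomputable def awt (A1 A2 A3 A4 : ℝ) (u w : Z2) : ℝ :=
  if Even (u.1 + u.2) then declaredWt A1 A2 A3 A4 u w
  else if Even (w.1 + w.2) then declaredWt A1 A2 A3 A4 w u
  else 0

/-- The offsets to all possible neighbors of a vertex in this graph
(non-edges among them carry weight `0`). -/
def offs : List Z2 :=
  [(1, 0), (-1, 0), (0, 1), (0, -1), (1, 1), (-1, -1), (2, 2), (-2, -2)]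

/-- The weighted graph Laplacian `Δh(u) = Σ_{w ~ u} a(u,w)(h(u) - h(w))` of this graph. -/
noncomputable def lapW (A1 A2 A3 A4 : ℝ) (h : Z2 → ℝ) (u : Z2) : ℝ :=
  (offs.map (fun d => awt A1 A2 A3 A4 u (u + d) * (h u - h (u + d)))).sum

lemma dw_shift (A1 A2 A3 A4 : ℝ) (u d : Z2) :
    declaredWt A1 A2 A3 A4 u (u + d) = declaredWt A1 A2 A3 A4 0 d := by
  simp [declaredWt, sub_eq_add_neg, add_right_inj]

lemma lap_even (A1 A2 A3 A4 : ℝ) (h : Z2 → ℝ) (x y : ℤ) (hpar : Even (x + y)) :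
    lapW A1 A2 A3 A4 h (x, y) =
      A2 * (h (x, y) - h (x+1, y)) + A1 * (h (x, y) - h (x-1, y)) +
      A2 * (h (x, y) - h (x, y+1)) + A1 * (h (x, y) - h (x, y-1)) +
      A4 * (h (x, y) - h (x+1, y+1)) + A4 * (h (x, y) - h (x-1, y-1)) +
      A3 * (h (x, y) - h (x+2, y+2)) + A3 * (h (x, y) - h (x-2, y-2)) := by
  have e : ∀ d : Z2, awt A1 A2 A3 A4 (x, y) ((x, y) + d) = declaredWt A1 A2 A3 A4 0 d := by
    intro d; simp [awt, hpar, dw_shift]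
  simp only [lapW, offs, List.map_cons, List.map_nil, List.sum_cons, List.sum_nil, e,
    Prod.mk_add_mk]
  norm_num [declaredWt, Prod.ext_iff]
  ring

lemma lap_odd (A1 A2 A3 A4 : ℝ) (h : Z2 → ℝ) (x y : ℤ) (hpar : ¬ Even (x + y)) :
    lapW A1 A2 A3 A4 h (x, y) =
      A1 * (h (x, y) - h (x+1, y)) + A2 * (h (x, y) - h (x-1, y)) +
      A1 * (h (x, y) - h (x, y+1)) + A2 * (h (x, y) - h (x, y-1)) := by
  have e : ∀ d : Z2, Even (d.1 + d.2) → awt A1 A2 A3 A4 (x, y) ((x, y) + d) = 0 := by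
    intro d hd
    have hno : ¬ Even (x + d.1 + (y + d.2)) := by
      rcases hd with ⟨k, hk⟩
      rintro ⟨m, hm⟩
      apply hpar
      exact ⟨m - k, by omega⟩
    simp [awt, hpar, hno]
  have e2 : ∀ d : Z2, ¬ Even (d.1 + d.2) →
      awt A1 A2 A3 A4 (x, y) ((x, y) + d) = declaredWt A1 A2 A3 A4 0 (-d) := by
    intro d hd
    have hw : Even (((x, y) + d).1 + ((x, y) + d).2) := by
      simp only [Prod.fst_add, Prod.snd_add]
      rcases Int.even_or_odd (x + y) with he | ho
      · exact absurd he hpar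
      rcases Int.even_or_odd (d.1 + d.2) with he | ho2
      · exact absurd he hd
      rcases ho with ⟨k, hk⟩; rcases ho2 with ⟨m, hm⟩
      exact ⟨k + m + 1, by omega⟩
    have key : declaredWt A1 A2 A3 A4 ((x, y) + d) (x, y) = declaredWt A1 A2 A3 A4 0 (-d) := by
      have := dw_shift A1 A2 A3 A4 ((x, y) + d) (-d)
      simpa using this
    rw [awt, if_neg (by simpa using hpar), if_pos hw, key]
  simp only [lapW, offs, List.map_cons, List.map_nil, List.sum_cons, List.sum_nil]
  rw [e (1,1) (by decide), e (-1,-1) (by decide), e (2,2) (by decide), e (-2,-2) (by decide),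
    e2 (1,0) (by decide), e2 (-1,0) (by decide), e2 (0,1) (by decide), e2 (0,-1) (by decide)]
  simp only [Prod.mk_add_mk]
  norm_num [declaredWt, Prod.ext_iff]
  ring

/-- **A non-planar counterexample on the square lattice.**
For positive `A₁ ≠ A₂` and `A₃ > 2A₁²A₂²/((A₁-A₂)²(A₁+A₂))` there is `A₄ > 0` such that
`h(x₁,x₂) = (-A₂/A₁)^{x₁} 1_{x₁ = x₂}` is harmonic on `(ℤ², 𝓔(A₁,A₂,A₃,A₄))`; in
particular `h` is a nonzero harmonic function supported on the diagonal `{x₁ = x₂}`. -/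
theorem nonplanar_counterexample (A1 A2 A3 : ℝ)
    (hA1 : 0 < A1) (hA2 : 0 < A2) (hne : A1 ≠ A2)
    (hA3 : 2 * A1 ^ 2 * A2 ^ 2 / ((A1 - A2) ^ 2 * (A1 + A2)) < A3) :
    ∃ A4 : ℝ, 0 < A4 ∧
      (∀ u : Z2,
        lapW A1 A2 A3 A4 (fun x => if x.1 = x.2 then (-A2 / A1) ^ x.1 else 0) u = 0) ∧
      (fun x : Z2 => if x.1 = x.2 then (-A2 / A1) ^ x.1 else (0 : ℝ)) ≠ (fun _ => 0) ∧
      (∀ x : Z2, x.1 ≠ x.2 →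
        (if x.1 = x.2 then (-A2 / A1) ^ x.1 else (0 : ℝ)) = 0) := by
  have h1 : A1 ≠ 0 := ne_of_gt hA1
  have h2 : A2 ≠ 0 := ne_of_gt hA2
  have h12 : A1 + A2 ≠ 0 := ne_of_gt (by linarith)
  have hsub : A1 - A2 ≠ 0 := sub_ne_zero.mpr hne
  set r : ℝ := -A2 / A1 with hr_def
  have hr : r ≠ 0 := by
    rw [hr_def, neg_div]
    exact neg_ne_zero.mpr (div_ne_zero h2 h1)
  have hkey : A1 * r = -A2 := by
    rw [hr_def]; field_simp
  set H : Z2 → ℝ := fun p => if p.1 = p.2 then r ^ p.1 else 0 with hH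
  have Hd : ∀ n : ℤ, H (n, n) = r ^ n := fun n => by simp [hH]
  have Ho : ∀ a b : ℤ, a ≠ b → H (a, b) = 0 := fun a b hab => by simp [hH, hab]
  refine ⟨A3 * (A1 - A2) ^ 2 / (A1 * A2) - 2 * A1 * A2 / (A1 + A2), ?_, ?_, ?_, ?_⟩
  · have hD : (0:ℝ) < (A1 - A2) ^ 2 * (A1 + A2) := by positivity
    have h3 : 2 * A1 ^ 2 * A2 ^ 2 < A3 * ((A1 - A2) ^ 2 * (A1 + A2)) :=
      (div_lt_iff₀ hD).mp hA3
    have heq : A3 * (A1 - A2) ^ 2 / (A1 * A2) - 2 * A1 * A2 / (A1 + A2)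
        = (A3 * ((A1 - A2) ^ 2 * (A1 + A2)) - 2 * A1 ^ 2 * A2 ^ 2) / (A1 * A2 * (A1 + A2)) := by
      field_simp
    rw [heq]
    exact div_pos (by linarith) (by positivity)
  · rintro ⟨x, y⟩
    set A4 : ℝ := A3 * (A1 - A2) ^ 2 / (A1 * A2) - 2 * A1 * A2 / (A1 + A2) with hA4
    by_cases hpar : Even (x + y)
    · rw [lap_even A1 A2 A3 A4 H x y hpar]
      by_cases hxy : x = y
      · subst hxy
        rw [Hd x, Ho (x+1) x (by omega), Ho (x-1) x (by omega), Ho x (x+1) (by omega),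
          Ho x (x-1) (by omega), Hd (x+1), Hd (x-1), Hd (x+2), Hd (x-2)]
        have z1 : r ^ (x + 1) = r ^ x * r := by rw [zpow_add_one₀ hr]
        have z2 : r ^ (x - 1) = r ^ x * r⁻¹ := by rw [zpow_sub_one₀ hr]
        have z3 : r ^ (x + 2) = r ^ x * r * r := by
          rw [show x + 2 = x + 1 + 1 by ring, zpow_add_one₀ hr, zpow_add_one₀ hr]
        have z4 : r ^ (x - 2) = r ^ x * r⁻¹ * r⁻¹ := by
          rw [show x - 2 = x - 1 - 1 by ring, zpow_sub_one₀ hr, zpow_sub_one₀ hr]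
        rw [z1, z2, z3, z4]
        have hE : A2 * (1 - 0) + A1 * (1 - 0) + A2 * (1 - 0) + A1 * (1 - 0) +
            A4 * (1 - r) + A4 * (1 - r⁻¹) + A3 * (1 - r * r) + A3 * (1 - r⁻¹ * r⁻¹) = 0 := by
          have hrinv : r⁻¹ = -(A1 / A2) := by
            apply inv_eq_of_mul_eq_one_right
            rw [hr_def]; field_simp
          rw [hA4, hr_def, hrinv]
          field_simp
          ring
        calc A2 * (r ^ x - 0) + A1 * (r ^ x - 0) + A2 * (r ^ x - 0) + A1 * (r ^ x - 0) +
              A4 * (r ^ x - r ^ x * r) + A4 * (r ^ x - r ^ x * r⁻¹) +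
              A3 * (r ^ x - r ^ x * r * r) + A3 * (r ^ x - r ^ x * r⁻¹ * r⁻¹)
            = r ^ x * (A2 * (1 - 0) + A1 * (1 - 0) + A2 * (1 - 0) + A1 * (1 - 0) +
              A4 * (1 - r) + A4 * (1 - r⁻¹) + A3 * (1 - r * r) + A3 * (1 - r⁻¹ * r⁻¹)) := by
              ring
          _ = 0 := by rw [hE, mul_zero]
      · obtain ⟨k, hk⟩ : ∃ k : ℤ, y = x + 2 * k := by
          rcases hpar with ⟨m, hm⟩; exact ⟨m - x, by omega⟩
        have hk0 : k ≠ 0 := by rintro rfl; omega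
        rw [Ho x y hxy, Ho (x+1) y (by omega), Ho (x-1) y (by omega), Ho x (y+1) (by omega),
          Ho x (y-1) (by omega), Ho (x+1) (y+1) (by omega), Ho (x-1) (y-1) (by omega),
          Ho (x+2) (y+2) (by omega), Ho (x-2) (y-2) (by omega)]
        ring
    · rw [lap_odd A1 A2 A3 A4 H x y hpar]
      have hxy : x ≠ y := by rintro rfl; exact hpar ⟨x, by ring⟩
      by_cases hy1 : y = x + 1
      · subst hy1
        rw [show x + 1 - 1 = x from by ring]
        rw [Ho x (x+1) (by omega), Hd (x+1), Ho (x-1) (x+1) (by omega),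
          Ho x (x+1+1) (by omega), Hd x, zpow_add_one₀ hr]
        linear_combination (-(r ^ x)) * hkey
      · by_cases hy2 : y = x - 1
        · subst hy2
          rw [show x - 1 + 1 = x from by ring]
          rw [Ho x (x-1) (by omega), Ho (x+1) (x-1) (by omega), Hd (x-1), Hd x,
            Ho x (x-1-1) (by omega)]
          have zx : r ^ x = r ^ (x - 1) * r := by
            rw [← zpow_add_one₀ hr, sub_add_cancel]
          rw [zx]
          linear_combination (-(r ^ (x-1))) * hkey
        · rw [Ho x y hxy, Ho (x+1) y (by omega), Ho (x-1) y (by omega),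
            Ho x (y+1) (by omega), Ho x (y-1) (by omega)]
          ring
  · intro hcontra
    have h00 := congrFun hcontra (0, 0)
    rw [Hd 0] at h00
    norm_num at h00
  · intro x hx
    simp [hx]
end

section
/- Let c = 3 + 2√2 (so that c + c⁻¹ = 6). The function f : ℤ³ → ℝ defined by f(x, y, z) = (−1)^x · c^z if x = y and f(x, y, z) = 0 otherwise, satisfies Δf(u) = 0 for every u ∈ ℤ³, where Δf(u) = Σ_{v : |v−u|₁ = 1} (f(u) − f(v)) is the unit-conductance Laplacian on ℤ³. In particular, f is a nonconstant harmonic function on ℤ³ that vanishes outside the set {(x,y,z) : x = y}. -/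
/-- The vertex set of the cubic lattice `ℤ³`. -/
abbrev Z3 := ℤ × ℤ × ℤ

/-- The six nearest neighbors of a point of `ℤ³`. -/
def nbrs3 (u : Z3) : List Z3 :=
  [(u.1 + 1, u.2.1, u.2.2), (u.1 - 1, u.2.1, u.2.2),
   (u.1, u.2.1 + 1, u.2.2), (u.1, u.2.1 - 1, u.2.2),
   (u.1, u.2.1, u.2.2 + 1), (u.1, u.2.1, u.2.2 - 1)]

/-- The unit-conductance graph Laplacian on `ℤ³`:
`Δf(u) = Σ_{|v-u|₁ = 1} (f(u) - f(v))`. -/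
noncomputable def lap3 (f : Z3 → ℝ) (u : Z3) : ℝ :=
  ((nbrs3 u).map (fun v => f u - f v)).sum

lemma sqrt2_sq : Real.sqrt 2 * Real.sqrt 2 = 2 :=
  Real.mul_self_sqrt (by norm_num)

lemma c_pos : (0:ℝ) < 3 + 2 * Real.sqrt 2 := by
  have := Real.sqrt_nonneg 2; linarith

lemma c_inv : (3 + 2 * Real.sqrt 2)⁻¹ = 3 - 2 * Real.sqrt 2 := by
  have h : (3 + 2 * Real.sqrt 2) * (3 - 2 * Real.sqrt 2) = 1 := by
    have := sqrt2_sq; ring_nf; nlinarith [sqrt2_sq]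
  exact inv_eq_of_mul_eq_one_right h

/-- **A harmonic function on ℤ³ which is bounded outside a plane.**
With `c = 3 + 2√2` (so that `c + c⁻¹ = 6`), the function
`f(x,y,z) = (-1)^x c^z 1_{x = y}` is harmonic on `ℤ³` for the unit-conductance Laplacian;
in particular it is a nonconstant harmonic function vanishing outside `{x = y}`. -/
theorem counterexample_Z3 :
    (3 + 2 * Real.sqrt 2) + (3 + 2 * Real.sqrt 2)⁻¹ = 6 ∧
    (∀ u : Z3, lap3 (fun w : Z3 =>
        if w.1 = w.2.1 then (-1 : ℝ) ^ w.1 * (3 + 2 * Real.sqrt 2) ^ w.2.2 else 0) u = 0) ∧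
    (∃ u v : Z3,
        (if u.1 = u.2.1 then (-1 : ℝ) ^ u.1 * (3 + 2 * Real.sqrt 2) ^ u.2.2 else 0) ≠
        (if v.1 = v.2.1 then (-1 : ℝ) ^ v.1 * (3 + 2 * Real.sqrt 2) ^ v.2.2 else 0)) ∧
    (∀ u : Z3, u.1 ≠ u.2.1 →
        (if u.1 = u.2.1 then (-1 : ℝ) ^ u.1 * (3 + 2 * Real.sqrt 2) ^ u.2.2 else (0:ℝ)) = 0) := by
  set s := Real.sqrt 2 with hs
  have hc : (3 + 2 * s) ≠ 0 := ne_of_gt c_pos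
  have hn1 : (-1 : ℝ) ≠ 0 := by norm_num
  refine ⟨by rw [c_inv]; ring, ?_, ⟨(0,0,0), (1,0,0), by norm_num⟩, ?_⟩
  · rintro ⟨x, y, z⟩
    simp only [lap3, nbrs3, List.map_cons, List.map_nil, List.sum_cons, List.sum_nil]
    by_cases hxy : x = y
    · subst hxy
      have e1 : (x + 1 : ℤ) ≠ x := by omega
      have e2 : (x - 1 : ℤ) ≠ x := by omega
      have e3 : x ≠ x + 1 := by omega
      have e4 : x ≠ x - 1 := by omega
      simp only [if_pos rfl, if_neg e1, if_neg e2, if_neg e3, if_neg e4, if_true]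
      rw [zpow_add₀ hc, zpow_sub₀ hc, div_eq_mul_inv, zpow_one, c_inv]
      ring_nf
      rw [← hs]; ring
    · have e1 : ¬ (x = y) := hxy
      simp only [if_neg e1]
      by_cases h1 : x + 1 = y
      · have h2 : (x - 1 : ℤ) ≠ y := by omega
        have h3 : x ≠ y + 1 := by omega
        have h4 : x = y - 1 := by omega
        simp only [if_pos h1, if_neg h2, if_neg h3, if_pos h4]
        rw [zpow_add₀ hn1, zpow_one]
        ring
      · by_cases h2 : x - 1 = y
        · have h3 : x = y + 1 := by omega
          have h4 : x ≠ y - 1 := by omega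
          simp only [if_neg h1, if_pos h2, if_pos h3, if_neg h4]
          rw [zpow_sub₀ hn1, zpow_one]
          ring
        · have h3 : x ≠ y + 1 := by omega
          have h4 : x ≠ y - 1 := by omega
          simp only [if_neg h1, if_neg h2, if_neg h3, if_neg h4]
          ring
  · rintro ⟨x, y, z⟩ h
    simp [h]
end
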